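/- Let ξ_i be i.i.d. {−1,1}-valued with mean 2p−1, p ≠ 1/2, and, for 0 ≤ k ≤ ℓ ≤ N, set Ξ(−k) = Π_{j=0}^{k} ξ_{N−j}^{β_{k,j}}. Then Cov(Ξ(−k), Ξ(−ℓ)) = (2p−1)^{B(k,ℓ)} − (2p−1)^{2^θ(k)+2^θ(ℓ)}, and this covariance is at least 4p(1−p)(2p−1)^{B(k,ℓ)} > 0 when (2p−1)^{B(k,ℓ)} > 0. -/

import Mathlib

open MeasureTheory ProbabilityTheory

/-- θ(k): number of ones in the binary representation of k. -/
def binOnes (k : ℕ) : ℕ := (Nat.digits 2 k).count 1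

/-- the set of j with C(k,j) odd -/
def Sod (k : ℕ) : Finset ℕ := (Finset.range (k+1)).filter (fun j => k.choose j % 2 = 1)

lemma mem_Sod {k j : ℕ} : j ∈ Sod k ↔ k.choose j % 2 = 1 := by
  simp only [Sod, Finset.mem_filter, Finset.mem_range]
  constructor
  · tauto
  · intro h
    refine ⟨?_, h⟩
    by_contra hc
    rw [Nat.choose_eq_zero_of_lt (by omega)] at h
    omega

lemma choose_parity (n j : ℕ) :
    n.choose j % 2 = ((n % 2).choose (j % 2) * (n / 2).choose (j / 2)) % 2 :=
  @Choose.choose_modEq_choose_mod_mul_choose_div_nat n j 2 ⟨Nat.prime_two⟩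

lemma par_even (m j : ℕ) :
    (2*m).choose j % 2 = if j % 2 = 0 then m.choose (j/2) % 2 else 0 := by
  have h := choose_parity (2*m) j
  rw [Nat.mul_mod_right, Nat.mul_div_cancel_left _ (by norm_num)] at h
  rcases Nat.mod_two_eq_zero_or_one j with hj | hj <;> simp [hj] at h ⊢ <;> omega

lemma par_odd (m j : ℕ) : (2*m+1).choose j % 2 = m.choose (j/2) % 2 := by
  have h := choose_parity (2*m+1) j
  have h1 : (2*m+1) % 2 = 1 := by omega
  have h2 : (2*m+1) / 2 = m := by omega
  rw [h1, h2] at h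
  rcases Nat.mod_two_eq_zero_or_one j with hj | hj <;> simp [hj] at h ⊢ <;> omega

lemma card_Sod (k : ℕ) : (Sod k).card = 2 ^ binOnes k := by
  induction k using Nat.strong_induction_on with
  | _ k ih =>
    rcases Nat.eq_zero_or_pos k with rfl | hk
    · have : Sod 0 = {0} := by decide
      simp [this, binOnes]
    · set m := k / 2 with hm
      have hmlt : m < k := by omega
      rcases Nat.mod_two_eq_zero_or_one k with hpar | hpar
      · have hkm : k = 2 * m := by omega
        have hbin : binOnes k = binOnes m := by
          rw [binOnes, binOnes, Nat.digits_def' (by norm_num : 1 < 2) hk, hpar, ← hm]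
          simp
        have himg : Sod k = (Sod m).image (fun i => 2 * i) := by
          ext j
          simp only [mem_Sod, Finset.mem_image, hkm, par_even]
          constructor
          · intro h
            rcases Nat.mod_two_eq_zero_or_one j with hj | hj
            · exact ⟨j / 2, by simpa [hj] using h, by omega⟩
            · simp [hj] at h
          · rintro ⟨i, hi, rfl⟩
            have h2 : 2 * i / 2 = i := by omega
            simp [h2, hi]
        rw [himg, Finset.card_image_of_injective _ (fun a b h => by omega), hbin, ih m hmlt]
      · have hkm : k = 2 * m + 1 := by omega
        have hbin : binOnes k = binOnes m + 1 := by
          rw [binOnes, binOnes, Nat.digits_def' (by norm_num : 1 < 2) hk, hpar, ← hm]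
          simp
        have himg : Sod k = (Sod m).image (fun i => 2 * i) ∪ (Sod m).image (fun i => 2 * i + 1) := by
          ext j
          simp only [mem_Sod, Finset.mem_union, Finset.mem_image, hkm, par_odd]
          constructor
          · intro h
            rcases Nat.mod_two_eq_zero_or_one j with hj | hj
            · exact Or.inl ⟨j / 2, h, by omega⟩
            · exact Or.inr ⟨j / 2, h, by omega⟩
          · rintro (⟨i, hi, rfl⟩ | ⟨i, hi, rfl⟩)
            · have h2 : 2 * i / 2 = i := by omega
              simp [h2, hi]
            · have h2 : (2 * i + 1) / 2 = i := by omega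
              simp [h2, hi]
        have hdisj : Disjoint ((Sod m).image (fun i => 2 * i))
            ((Sod m).image (fun i => 2 * i + 1)) := by
          rw [Finset.disjoint_left]
          intro a ha ha'
          simp only [Finset.mem_image] at ha ha'
          obtain ⟨i, _, hi⟩ := ha
          obtain ⟨i', _, hi'⟩ := ha'
          omega
        rw [himg, Finset.card_union_of_disjoint hdisj,
          Finset.card_image_of_injective _ (fun a b h => by omega),
          Finset.card_image_of_injective _ (fun a b h => by omega), hbin, ih m hmlt, pow_succ]
        ring

lemma prod_mul_prod_symmDiff {f : ℕ → ℝ} (hf : ∀ j, f j * f j = 1) (A B : Finset ℕ) :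
    (∏ j ∈ A, f j) * (∏ j ∈ B, f j) = ∏ j ∈ symmDiff A B, f j := by
  have hu : symmDiff A B ∪ A ∩ B = A ∪ B := by
    ext j; simp [Finset.mem_symmDiff]; tauto
  have hd : Disjoint (symmDiff A B) (A ∩ B) := by
    rw [Finset.disjoint_left]
    intro a ha ha'
    simp [Finset.mem_symmDiff] at ha
    simp at ha'
    tauto
  calc (∏ j ∈ A, f j) * (∏ j ∈ B, f j)
      = (∏ j ∈ A ∪ B, f j) * ∏ j ∈ A ∩ B, f j := (Finset.prod_union_inter).symm
    _ = ((∏ j ∈ symmDiff A B, f j) * ∏ j ∈ A ∩ B, f j) * ∏ j ∈ A ∩ B, f j := by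
        rw [← hu, Finset.prod_union hd]
    _ = (∏ j ∈ symmDiff A B, f j) * ∏ j ∈ A ∩ B, (f j * f j) := by
        rw [Finset.prod_mul_distrib]; ring
    _ = ∏ j ∈ symmDiff A B, f j := by simp [hf]

lemma integrable_prod_xi {Ω : Type*} [MeasureSpace Ω] [IsProbabilityMeasure (ℙ : Measure Ω)]
    (ξ : ℕ → Ω → ℝ) (hmeas : ∀ i, Measurable (ξ i))
    (hval : ∀ i ω, ξ i ω = 1 ∨ ξ i ω = -1) (U : Finset ℕ) :
    Integrable (∏ i ∈ U, ξ i) ℙ := by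
  apply (integrable_const (1:ℝ)).mono'
  · have he : (∏ i ∈ U, ξ i) = fun a => ∏ i ∈ U, ξ i a := by
      funext a; exact Finset.prod_apply a U ξ
    rw [he]
    exact (Finset.measurable_prod U (fun i _ => hmeas i)).aestronglyMeasurable
  · filter_upwards with ω
    rw [Finset.prod_apply, Real.norm_eq_abs, Finset.abs_prod]
    apply Finset.prod_le_one
    · intro i _; exact abs_nonneg _
    · intro i _; rcases hval i ω with h | h <;> simp [h]

lemma integral_prod_xi {Ω : Type*} [MeasureSpace Ω] [IsProbabilityMeasure (ℙ : Measure Ω)]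
    (ξ : ℕ → Ω → ℝ) (hmeas : ∀ i, Measurable (ξ i))
    (hindep : iIndepFun ξ ℙ)
    (hval : ∀ i ω, ξ i ω = 1 ∨ ξ i ω = -1) (U : Finset ℕ) :
    ∫ ω, ∏ i ∈ U, ξ i ω ∂ℙ = ∏ i ∈ U, ∫ ω, ξ i ω ∂ℙ := by
  induction U using Finset.induction_on with
  | empty => simp
  | @insert a s ha ih =>
    have hind : IndepFun (∏ j ∈ s, ξ j) (ξ a) ℙ :=
      hindep.indepFun_finsetProd_of_notMem hmeas ha
    have h1 : Integrable (∏ j ∈ s, ξ j) ℙ := integrable_prod_xi ξ hmeas hval s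
    have h2 : Integrable (ξ a) ℙ := by
      simpa using integrable_prod_xi ξ hmeas hval {a}
    have key := hind.integral_mul_eq_mul_integral h1.aestronglyMeasurable h2.aestronglyMeasurable
    have e1 : (fun ω => ∏ i ∈ insert a s, ξ i ω) = (∏ j ∈ s, ξ j) * ξ a := by
      funext ω
      simp [Finset.prod_insert ha, Finset.prod_apply, mul_comm]
    calc ∫ ω, ∏ i ∈ insert a s, ξ i ω ∂ℙ
        = ∫ ω, ((∏ j ∈ s, ξ j) * ξ a) ω ∂ℙ := by rw [e1]
      _ = (∫ ω, (∏ j ∈ s, ξ j) ω ∂ℙ) * ∫ ω, ξ a ω ∂ℙ := key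
      _ = (∏ i ∈ s, ∫ ω, ξ i ω ∂ℙ) * ∫ ω, ξ a ω ∂ℙ := by
          simp only [Finset.prod_apply]; rw [ih]
      _ = ∏ i ∈ insert a s, ∫ ω, ξ i ω ∂ℙ := by
          rw [Finset.prod_insert ha, mul_comm]

theorem stmt_10 {Ω : Type*} [MeasureSpace Ω] [IsProbabilityMeasure (ℙ : Measure Ω)]
    (p : ℝ) (hp : p ∈ Set.Ioo (0 : ℝ) 1) (hp' : p ≠ 1 / 2)
    (ξ : ℕ → Ω → ℝ) (hmeas : ∀ i, Measurable (ξ i))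
    (hindep : iIndepFun ξ ℙ)
    (hval : ∀ i ω, ξ i ω = 1 ∨ ξ i ω = -1)
    (hmean : ∀ i, ∫ ω, ξ i ω ∂ℙ = 2 * p - 1)
    (k ℓ N : ℕ) (hkℓ : k ≤ ℓ) (hℓN : ℓ ≤ N)
    (B : ℕ)
    (hB : B = ((Finset.Icc 1 (max k ℓ)).filter
            (fun j => k.choose j % 2 + ℓ.choose j % 2 = 1)).card)
    (X Y : Ω → ℝ)
    (hX : X = fun ω => ∏ j ∈ Finset.range (k + 1), (ξ (N - j) ω) ^ (k.choose j % 2))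
    (hY : Y = fun ω => ∏ j ∈ Finset.range (ℓ + 1), (ξ (N - j) ω) ^ (ℓ.choose j % 2)) :
    (∫ ω, X ω * Y ω ∂ℙ) - (∫ ω, X ω ∂ℙ) * (∫ ω, Y ω ∂ℙ)
        = (2 * p - 1) ^ B - (2 * p - 1) ^ (2 ^ binOnes k + 2 ^ binOnes ℓ)
      ∧ (0 < (2 * p - 1) ^ B →
          4 * p * (1 - p) * (2 * p - 1) ^ B
              ≤ (∫ ω, X ω * Y ω ∂ℙ) - (∫ ω, X ω ∂ℙ) * (∫ ω, Y ω ∂ℙ)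
            ∧ 0 < 4 * p * (1 - p) * (2 * p - 1) ^ B) := by
  obtain ⟨hp0, hp1⟩ := hp
  have hkN : k ≤ N := le_trans hkℓ hℓN
  -- expected product over arbitrary subsets of indices
  have key : ∀ T : Finset ℕ, (∀ j ∈ T, j ≤ N) →
      ∫ ω, ∏ j ∈ T, ξ (N - j) ω ∂ℙ = (2 * p - 1) ^ T.card := by
    intro T hT
    have hinj : ∀ a ∈ T, ∀ b ∈ T, N - a = N - b → a = b := by
      intro a ha b hb h
      have := hT a ha; have := hT b hb; omega
    have h1 : ∀ ω : Ω, ∏ j ∈ T, ξ (N - j) ω = ∏ i ∈ T.image (fun j => N - j), ξ i ω := by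
      intro ω
      rw [Finset.prod_image (fun a ha b hb h => hinj a ha b hb h)]
    simp_rw [h1]
    rw [integral_prod_xi ξ hmeas hindep hval,
      Finset.prod_congr rfl (fun i _ => hmean i), Finset.prod_const,
      Finset.card_image_of_injOn
        (fun a ha b hb h => hinj a (by simpa using ha) b (by simpa using hb) h)]
  -- X and Y as products over Sod sets
  have hXS : X = fun ω => ∏ j ∈ Sod k, ξ (N - j) ω := by
    rw [hX]; funext ω
    rw [Sod, Finset.prod_filter]
    apply Finset.prod_congr rfl
    intro j _
    rcases Nat.mod_two_eq_zero_or_one (k.choose j) with h | h <;> simp [h]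
  have hYS : Y = fun ω => ∏ j ∈ Sod ℓ, ξ (N - j) ω := by
    rw [hY]; funext ω
    rw [Sod, Finset.prod_filter]
    apply Finset.prod_congr rfl
    intro j _
    rcases Nat.mod_two_eq_zero_or_one (ℓ.choose j) with h | h <;> simp [h]
  have hSodk_le : ∀ j ∈ Sod k, j ≤ N := by
    intro j hj
    have := Finset.mem_range.mp (Finset.mem_filter.mp hj).1
    omega
  have hSodl_le : ∀ j ∈ Sod ℓ, j ≤ N := by
    intro j hj
    have := Finset.mem_range.mp (Finset.mem_filter.mp hj).1
    omega
  have EX : ∫ ω, X ω ∂ℙ = (2 * p - 1) ^ 2 ^ binOnes k := by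
    simp only [hXS]
    rw [key (Sod k) hSodk_le, card_Sod]
  have EY : ∫ ω, Y ω ∂ℙ = (2 * p - 1) ^ 2 ^ binOnes ℓ := by
    simp only [hYS]
    rw [key (Sod ℓ) hSodl_le, card_Sod]
  have hXYp : ∀ ω, X ω * Y ω = ∏ j ∈ symmDiff (Sod k) (Sod ℓ), ξ (N - j) ω := by
    intro ω
    simp only [hXS, hYS]
    exact prod_mul_prod_symmDiff
      (fun j => by rcases hval (N - j) ω with h | h <;> rw [h] <;> norm_num) _ _
  have hSD_le : ∀ j ∈ symmDiff (Sod k) (Sod ℓ), j ≤ N := by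
    intro j hj
    rw [Finset.mem_symmDiff] at hj
    rcases hj with ⟨h, _⟩ | ⟨h, _⟩
    · exact hSodk_le j h
    · exact hSodl_le j h
  have EXY : ∫ ω, X ω * Y ω ∂ℙ = (2 * p - 1) ^ (symmDiff (Sod k) (Sod ℓ)).card := by
    simp_rw [hXYp]
    exact key _ hSD_le
  -- identify B with the cardinality of the symmetric difference
  have hBc : B = (symmDiff (Sod k) (Sod ℓ)).card := by
    rw [hB]; congr 1; ext j
    simp only [Finset.mem_filter, Finset.mem_Icc, Finset.mem_symmDiff, mem_Sod]
    have hmk := Nat.mod_two_eq_zero_or_one (k.choose j)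
    have hml := Nat.mod_two_eq_zero_or_one (ℓ.choose j)
    constructor
    · rintro ⟨⟨h1, h2⟩, h3⟩; omega
    · intro h
      have hj0 : j ≠ 0 := by
        rintro rfl
        simp [Nat.choose_zero_right] at h
      have hjm : j ≤ max k ℓ := by
        by_contra hc
        rw [Nat.choose_eq_zero_of_lt (show k < j by omega),
          Nat.choose_eq_zero_of_lt (show ℓ < j by omega)] at h
        simp at h
      exact ⟨⟨by omega, hjm⟩, by omega⟩
  have EXY' : ∫ ω, X ω * Y ω ∂ℙ = (2 * p - 1) ^ B := by rw [EXY, hBc]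
  -- cardinality bookkeeping
  have hI : 1 ≤ (Sod k ∩ Sod ℓ).card := by
    apply Finset.card_pos.mpr
    exact ⟨0, Finset.mem_inter.mpr ⟨mem_Sod.mpr (by simp), mem_Sod.mpr (by simp)⟩⟩
  have hcard : 2 ^ binOnes k + 2 ^ binOnes ℓ = B + 2 * (Sod k ∩ Sod ℓ).card := by
    rw [← card_Sod, ← card_Sod, hBc]
    have hu : symmDiff (Sod k) (Sod ℓ) ∪ Sod k ∩ Sod ℓ = Sod k ∪ Sod ℓ := by
      ext j; simp [Finset.mem_symmDiff]; tauto
    have hd : Disjoint (symmDiff (Sod k) (Sod ℓ)) (Sod k ∩ Sod ℓ) := by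
      rw [Finset.disjoint_left]
      intro a ha ha'
      simp [Finset.mem_symmDiff] at ha
      simp at ha'
      tauto
    have h1 := Finset.card_union_add_card_inter (Sod k) (Sod ℓ)
    have h2 : (Sod k ∪ Sod ℓ).card
        = (symmDiff (Sod k) (Sod ℓ)).card + (Sod k ∩ Sod ℓ).card := by
      rw [← hu, Finset.card_union_of_disjoint hd]
    omega
  constructor
  · rw [EXY', EX, EY, ← pow_add]
  · intro hq
    set I := (Sod k ∩ Sod ℓ).card with hIdef
    have hA : (2 * p - 1) ^ (2 ^ binOnes k + 2 ^ binOnes ℓ)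
        = (2 * p - 1) ^ B * ((2 * p - 1) ^ 2) ^ I := by
      rw [hcard, pow_add, pow_mul]
    have hq2 : (2 * p - 1) ^ 2 < 1 := by nlinarith
    have hpow : ((2 * p - 1) ^ 2) ^ I ≤ (2 * p - 1) ^ 2 := by
      calc ((2 * p - 1) ^ 2) ^ I ≤ ((2 * p - 1) ^ 2) ^ 1 :=
            pow_le_pow_of_le_one (sq_nonneg _) hq2.le hI
        _ = (2 * p - 1) ^ 2 := pow_one _
    have hmul : (2 * p - 1) ^ B * ((2 * p - 1) ^ 2) ^ I
        ≤ (2 * p - 1) ^ B * (2 * p - 1) ^ 2 :=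
      mul_le_mul_of_nonneg_left hpow hq.le
    constructor
    · rw [EXY', EX, EY, ← pow_add, hA]
      nlinarith [hmul, hq]
    · have h4 : 0 < 4 * p * (1 - p) := by nlinarith
      exact mul_pos h4 hq
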